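/- Every orthogonally JRS-symplectic matrix W ∈ ℝ^{4n×4n} is JRS-symmetric and hence has the block structure W = [[W₀, W₂, W₁, W₃], [−W₂, W₀, W₃, −W₁], [−W₁, −W₃, W₀, W₂], [−W₃, W₁, −W₂, W₀]] for some W₀, W₁, W₂, W₃ ∈ ℝ^{n×n}. -/

import Mathlib

open Matrix Quaternion
open scoped Kronecker Quaternion

noncomputable section

/-- The 4×4 coefficient matrix of `J`. -/
def Jb : Matrix (Fin 4) (Fin 4) ℝ := !![0,0,-1,0; 0,0,0,-1; 1,0,0,0; 0,1,0,0]
/-- The 4×4 coefficient matrix of `R`. -/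
def Rb : Matrix (Fin 4) (Fin 4) ℝ := !![0,-1,0,0; 1,0,0,0; 0,0,0,1; 0,0,-1,0]
/-- The 4×4 coefficient matrix of `S`. -/
def Sb : Matrix (Fin 4) (Fin 4) ℝ := !![0,0,0,-1; 0,0,1,0; 0,-1,0,0; 1,0,0,0]

/-- `J_n = [[0,0,−I_n,0],[0,0,0,−I_n],[I_n,0,0,0],[0,I_n,0,0]]`. -/
def JJ (n : ℕ) : Matrix (Fin 4 × Fin n) (Fin 4 × Fin n) ℝ :=
  Jb ⊗ₖ (1 : Matrix (Fin n) (Fin n) ℝ)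
/-- `R_n = [[0,−I_n,0,0],[I_n,0,0,0],[0,0,0,I_n],[0,0,−I_n,0]]`. -/
def RRm (n : ℕ) : Matrix (Fin 4 × Fin n) (Fin 4 × Fin n) ℝ :=
  Rb ⊗ₖ (1 : Matrix (Fin n) (Fin n) ℝ)
/-- `S_n = [[0,0,0,−I_n],[0,0,I_n,0],[0,−I_n,0,0],[I_n,0,0,0]]`. -/
def SSm (n : ℕ) : Matrix (Fin 4 × Fin n) (Fin 4 × Fin n) ℝ :=
  Sb ⊗ₖ (1 : Matrix (Fin n) (Fin n) ℝ)

/-- A real 4m×4n matrix `M` is JRS-symmetric if `J_m M J_nᵀ = M`,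
`R_m M R_nᵀ = M` and `S_m M S_nᵀ = M`. -/
def JRSSymmetric {m n : ℕ} (M : Matrix (Fin 4 × Fin m) (Fin 4 × Fin n) ℝ) : Prop :=
  JJ m * M * (JJ n)ᵀ = M ∧ RRm m * M * (RRm n)ᵀ = M ∧ SSm m * M * (SSm n)ᵀ = M

/-- A real 4m×4n matrix `O` is JRS-symplectic if `O J_n Oᵀ = J_m`,
`O R_n Oᵀ = R_m` and `O S_n Oᵀ = S_m`. -/
def JRSSymplectic {m n : ℕ} (O : Matrix (Fin 4 × Fin m) (Fin 4 × Fin n) ℝ) : Prop :=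
  O * JJ n * Oᵀ = JJ m ∧ O * RRm n * Oᵀ = RRm m ∧ O * SSm n * Oᵀ = SSm m

/-- A real 4n×4n matrix is orthogonally JRS-symplectic if it is orthogonal
and JRS-symplectic. -/
def OrthoJRSSymplectic {n : ℕ} (W : Matrix (Fin 4 × Fin n) (Fin 4 × Fin n) ℝ) : Prop :=
  Wᵀ * W = 1 ∧ JRSSymplectic W

/-- The 4m×4n block matrix
`[[Q₀,Q₂,Q₁,Q₃],[−Q₂,Q₀,Q₃,−Q₁],[−Q₁,−Q₃,Q₀,Q₂],[−Q₃,Q₁,−Q₂,Q₀]]`. -/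
def upsilonBlocks {m n : ℕ} (Q0 Q1 Q2 Q3 : Matrix (Fin m) (Fin n) ℝ) :
    Matrix (Fin 4 × Fin m) (Fin 4 × Fin n) ℝ := fun p q =>
  !![Q0 p.2 q.2, Q2 p.2 q.2, Q1 p.2 q.2, Q3 p.2 q.2;
     -(Q2 p.2 q.2), Q0 p.2 q.2, Q3 p.2 q.2, -(Q1 p.2 q.2);
     -(Q1 p.2 q.2), -(Q3 p.2 q.2), Q0 p.2 q.2, Q2 p.2 q.2;
     -(Q3 p.2 q.2), Q1 p.2 q.2, -(Q2 p.2 q.2), Q0 p.2 q.2] p.1 q.1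

/-- The real counterpart `Υ_Q` of a quaternion matrix `Q`. -/
def Upsilon {m n : ℕ} (Q : Matrix (Fin m) (Fin n) ℍ[ℝ]) :
    Matrix (Fin 4 × Fin m) (Fin 4 × Fin n) ℝ :=
  upsilonBlocks (fun i j => (Q i j).re) (fun i j => (Q i j).imI)
    (fun i j => (Q i j).imJ) (fun i j => (Q i j).imK)

/-- Upper Hessenberg: zero below the first subdiagonal. -/
def UpperHessenbergM {n : ℕ} (A : Matrix (Fin n) (Fin n) ℝ) : Prop :=
  ∀ i j : Fin n, (j : ℕ) + 1 < (i : ℕ) → A i j = 0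

/-- Upper triangular: zero below the diagonal. -/
def UpperTriangularM {m n : ℕ} (A : Matrix (Fin m) (Fin n) ℝ) : Prop :=
  ∀ (i : Fin m) (j : Fin n), (j : ℕ) < (i : ℕ) → A i j = 0

/-- Strictly upper triangular: zero on and below the diagonal. -/
def StrictlyUpperTriangularM {m n : ℕ} (A : Matrix (Fin m) (Fin n) ℝ) : Prop :=
  ∀ (i : Fin m) (j : Fin n), (j : ℕ) ≤ (i : ℕ) → A i j = 0

/-- Tridiagonal: zero outside the three central diagonals. -/
def TridiagonalM {n : ℕ} (A : Matrix (Fin n) (Fin n) ℝ) : Prop :=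
  ∀ i j : Fin n, ((i : ℕ) + 1 < (j : ℕ) ∨ (j : ℕ) + 1 < (i : ℕ)) → A i j = 0


lemma kron_conj_apply {n : ℕ} (A B : Matrix (Fin 4) (Fin 4) ℝ)
    (M : Matrix (Fin 4 × Fin n) (Fin 4 × Fin n) ℝ) (p q : Fin 4 × Fin n) :
    ((A ⊗ₖ (1 : Matrix (Fin n) (Fin n) ℝ)) * M * (B ⊗ₖ (1 : Matrix (Fin n) (Fin n) ℝ))ᵀ) p q
      = ∑ c : Fin 4, ∑ d : Fin 4, A p.1 c * B q.1 d * M (c, p.2) (d, q.2) := by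
  simp [mul_apply, Fintype.sum_prod_type, kroneckerMap_apply, transpose_apply, one_apply,
    Fin.sum_univ_four, ite_mul, mul_ite]
  ring

lemma kron_mul_transpose_self {n : ℕ} (A : Matrix (Fin 4) (Fin 4) ℝ) (hA : A * Aᵀ = 1) :
    (A ⊗ₖ (1 : Matrix (Fin n) (Fin n) ℝ)) * (A ⊗ₖ (1 : Matrix (Fin n) (Fin n) ℝ))ᵀ = 1 := by
  rw [← kroneckerMap_transpose, ← mul_kronecker_mul, hA, transpose_one, mul_one,
    one_kronecker_one]

lemma Jb_orth : Jb * Jbᵀ = 1 := by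
  ext i j
  fin_cases i <;> fin_cases j <;>
    · simp only [mul_apply, transpose_apply, Fin.sum_univ_four]
      norm_num [Jb, one_apply, Fin.ext_iff, Matrix.cons_val_two, Matrix.cons_val_three]

lemma Rb_orth : Rb * Rbᵀ = 1 := by
  ext i j
  fin_cases i <;> fin_cases j <;>
    · simp only [mul_apply, transpose_apply, Fin.sum_univ_four]
      norm_num [Rb, one_apply, Fin.ext_iff, Matrix.cons_val_two, Matrix.cons_val_three]

lemma Sb_orth : Sb * Sbᵀ = 1 := by
  ext i j
  fin_cases i <;> fin_cases j <;>
    · simp only [mul_apply, transpose_apply, Fin.sum_univ_four]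
      norm_num [Sb, one_apply, Fin.ext_iff, Matrix.cons_val_two, Matrix.cons_val_three]

lemma symplectic_to_symmetric {n : ℕ} {W : Matrix (Fin 4 × Fin n) (Fin 4 × Fin n) ℝ}
    {E : Matrix (Fin 4 × Fin n) (Fin 4 × Fin n) ℝ}
    (hO : Wᵀ * W = 1) (hE : W * E * Wᵀ = E) (hEo : E * Eᵀ = 1) :
    E * W * Eᵀ = W := by
  have hcomm : E * W = W * E := by
    calc E * W = (W * E * Wᵀ) * W := by rw [hE]
    _ = W * E * (Wᵀ * W) := by rw [mul_assoc]
    _ = W * E := by rw [hO, mul_one]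
  rw [hcomm, mul_assoc, hEo, mul_one]

/-- Every orthogonally JRS-symplectic matrix is JRS-symmetric
and hence has the block structure
`[[W₀,W₂,W₁,W₃],[−W₂,W₀,W₃,−W₁],[−W₁,−W₃,W₀,W₂],[−W₃,W₁,−W₂,W₀]]`. -/
theorem ortho_jrs_symplectic_block_structure {n : ℕ}
    (W : Matrix (Fin 4 × Fin n) (Fin 4 × Fin n) ℝ) (hW : OrthoJRSSymplectic W) :
    JRSSymmetric W ∧
      ∃ W0 W1 W2 W3 : Matrix (Fin n) (Fin n) ℝ, W = upsilonBlocks W0 W1 W2 W3 := by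
  obtain ⟨hO, hJ, hR, hS⟩ := hW
  have hJs : JJ n * W * (JJ n)ᵀ = W :=
    symplectic_to_symmetric hO hJ (kron_mul_transpose_self Jb Jb_orth)
  have hRs : RRm n * W * (RRm n)ᵀ = W :=
    symplectic_to_symmetric hO hR (kron_mul_transpose_self Rb Rb_orth)
  have hSs : SSm n * W * (SSm n)ᵀ = W :=
    symplectic_to_symmetric hO hS (kron_mul_transpose_self Sb Sb_orth)
  refine ⟨⟨hJs, hRs, hSs⟩, ?_⟩
  have key : ∀ (E : Matrix (Fin 4) (Fin 4) ℝ),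
      (E ⊗ₖ (1 : Matrix (Fin n) (Fin n) ℝ)) * W * (E ⊗ₖ (1 : Matrix (Fin n) (Fin n) ℝ))ᵀ = W →
      ∀ (a b : Fin 4) (i j : Fin n),
        (∑ c : Fin 4, ∑ d : Fin 4, E a c * E b d * W (c, i) (d, j)) = W (a, i) (b, j) := by
    intro E hE a b i j
    rw [← kron_conj_apply E E W (a, i) (b, j)]
    exact congrFun (congrFun hE (a, i)) (b, j)
  have hJ' := key Jb hJs
  have hR' := key Rb hRs
  have hS' := key Sb hSs
  refine ⟨fun i j => W (0, i) (0, j), fun i j => W (0, i) (2, j),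
    fun i j => W (0, i) (1, j), fun i j => W (0, i) (3, j), ?_⟩
  ext ⟨a, i⟩ ⟨b, j⟩
  have h10 := hR' 1 0 i j; have h11 := hR' 1 1 i j
  have h12 := hR' 1 2 i j; have h13 := hR' 1 3 i j
  have h20 := hJ' 2 0 i j; have h21 := hJ' 2 1 i j
  have h22 := hJ' 2 2 i j; have h23 := hJ' 2 3 i j
  have h30 := hS' 3 0 i j; have h31 := hS' 3 1 i j
  have h32 := hS' 3 2 i j; have h33 := hS' 3 3 i j
  simp only [Fin.sum_univ_four] at h10 h11 h12 h13 h20 h21 h22 h23 h30 h31 h32 h33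
  norm_num [Jb, Rb, Sb, Matrix.vecHead, Matrix.vecTail, Matrix.cons_val_two, Matrix.cons_val_three] at h10 h11 h12 h13 h20 h21 h22 h23 h30 h31 h32 h33
  fin_cases a <;> fin_cases b <;>
    · simp only [upsilonBlocks, Fin.reduceFinMk, Fin.mk_zero, Fin.mk_one]
      norm_num [Matrix.vecHead, Matrix.vecTail, Matrix.cons_val_two, Matrix.cons_val_three]
      try linarith [h10, h11, h12, h13, h20, h21, h22, h23, h30, h31, h32, h33]
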